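/- If A is a real n×n matrix and D is a positive diagonal matrix such that AD + DAᵀ is positive definite, then every eigenvalue of A has positive real part. -/

import Mathlib

open Matrix

theorem stmt2 {n : ℕ} (A : Matrix (Fin n) (Fin n) ℝ)
    (d : Fin n → ℝ) (hd : ∀ i, 0 < d i)
    (hpd : (A * diagonal d + diagonal d * Aᵀ).PosDef)
    (μ : ℂ) (v : Fin n → ℂ) (hv : v ≠ 0)
    (heig : (A.map (fun x : ℝ => (x : ℂ))).mulVec v = μ • v) :
    0 < μ.re := by
  classical
  set Q : Matrix (Fin n) (Fin n) ℝ := A * diagonal d + diagonal d * Aᵀ with hQ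
  set u : Fin n → ℂ := fun i => v i / (d i : ℂ) with hu
  have hdc : ∀ i, (d i : ℂ) ≠ 0 := fun i => by exact_mod_cast (hd i).ne'
  have hv' : ∀ i, v i = (d i : ℂ) * u i := fun i => by
    show v i = (d i : ℂ) * (v i / (d i : ℂ)); rw [mul_div_assoc']; exact (mul_div_cancel_left₀ _ (hdc i)).symm
  have hune : u ≠ 0 := by
    intro h
    apply hv
    funext i
    have : u i = 0 := congrFun h i
    simp [hv' i, this]
  set Ac : Matrix (Fin n) (Fin n) ℂ := A.map (fun x : ℝ => (x : ℂ)) with hAc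
  set Mc : Matrix (Fin n) (Fin n) ℂ := (A * diagonal d).map (fun x : ℝ => (x : ℂ)) with hMc
  set s : ℝ := ∑ i, d i * Complex.normSq (u i) with hs
  have hspos : 0 < s := by
    obtain ⟨i, hi⟩ := Function.ne_iff.mp hune
    refine Finset.sum_pos' (fun j _ => mul_nonneg (hd j).le (Complex.normSq_nonneg _)) ⟨i, Finset.mem_univ i, ?_⟩
    exact mul_pos (hd i) (Complex.normSq_pos.mpr hi)
  -- Mc *ᵥ u = μ • v
  have hMcu : Mc *ᵥ u = μ • v := by
    have h1 : Mc = Ac * (diagonal d).map (fun x : ℝ => (x : ℂ)) := by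
      ext i j
      simp only [hMc, hAc, Matrix.mul_apply, Matrix.map_apply]
      push_cast
      refine Finset.sum_congr rfl fun k _ => ?_
      by_cases h : k = j <;> simp [Matrix.diagonal_apply, h]
    have h2 : (diagonal d).map (fun x : ℝ => (x : ℂ)) = diagonal (fun i => (d i : ℂ)) := by
      rw [Matrix.diagonal_map]; simp
    have h3 : diagonal (fun i => (d i : ℂ)) *ᵥ u = v := by
      funext i
      simp [mulVec_diagonal, hv' i]
    rw [h1, h2, ← mulVec_mulVec, h3, heig]
  have hsv : star u ⬝ᵥ v = (s : ℂ) := by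
    rw [hs]
    push_cast
    simp only [dotProduct, Pi.star_apply]
    refine Finset.sum_congr rfl fun i _ => ?_
    simp only [RCLike.star_def]
    rw [hv' i, Complex.normSq_eq_conj_mul_self]
    ring
  have ht : star u ⬝ᵥ (Mc *ᵥ u) = μ * (s : ℂ) := by
    rw [hMcu, dotProduct_smul, hsv, smul_eq_mul]
  -- Q complexified
  have hQc : Q.map (fun x : ℝ => (x : ℂ)) = Mc + Mcᴴ := by
    ext i j
    simp [hQ, hMc, conjTranspose_apply, Complex.conj_ofReal, Matrix.mul_diagonal,
      Matrix.diagonal_mul, transpose_apply, Matrix.add_apply]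
    push_cast
    ring
  have hherm : star u ⬝ᵥ (Mcᴴ *ᵥ u) = star (star u ⬝ᵥ (Mc *ᵥ u)) := by
    simp only [dotProduct, mulVec, conjTranspose_apply, Pi.star_apply, star_sum,
      star_mul', star_star, Finset.mul_sum]
    rw [Finset.sum_comm]
    exact Finset.sum_congr rfl fun i _ => Finset.sum_congr rfl fun j _ => by ring
  have hkey : star u ⬝ᵥ (Q.map (fun x : ℝ => (x : ℂ)) *ᵥ u) = μ * (s : ℂ) + star (μ * (s : ℂ)) := by
    rw [hQc, add_mulVec, dotProduct_add, ht, hherm, ht]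
  -- positivity from real PosDef
  set a : Fin n → ℝ := fun i => (u i).re with ha
  set b : Fin n → ℝ := fun i => (u i).im with hb
  have hre : (star u ⬝ᵥ (Q.map (fun x : ℝ => (x : ℂ)) *ᵥ u)).re
      = a ⬝ᵥ (Q *ᵥ a) + b ⬝ᵥ (Q *ᵥ b) := by
    simp only [dotProduct, mulVec, dotProduct, Pi.star_apply, Finset.mul_sum,
      Complex.re_sum, map_apply]
    rw [← Finset.sum_add_distrib]
    refine Finset.sum_congr rfl fun i _ => ?_
    rw [← Finset.sum_add_distrib]
    refine Finset.sum_congr rfl fun j _ => ?_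
    simp [Complex.mul_re, ha, hb] <;> ring
  have hpos : 0 < (star u ⬝ᵥ (Q.map (fun x : ℝ => (x : ℂ)) *ᵥ u)).re := by
    rw [hre]
    rcases Function.ne_iff.mp hune with ⟨i, hi⟩
    have hab : a ≠ 0 ∨ b ≠ 0 := by
      by_contra h
      push_neg at h
      apply hi
      have h1 := congrFun h.1 i
      have h2 := congrFun h.2 i
      simp only [ha, hb, Pi.zero_apply] at h1 h2
      exact Complex.ext h1 h2
    have hsa : ∀ x : Fin n → ℝ, 0 ≤ x ⬝ᵥ (Q *ᵥ x) := fun x => by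
      simpa using hpd.posSemidef.dotProduct_mulVec_nonneg x
    rcases hab with h | h
    · have := hpd.dotProduct_mulVec_pos h
      simp only [star_trivial] at this
      linarith [hsa b]
    · have := hpd.dotProduct_mulVec_pos h
      simp only [star_trivial] at this
      linarith [hsa a]
  rw [hkey] at hpos
  simp only [Complex.add_re, Complex.mul_re, Complex.ofReal_re, Complex.ofReal_im,
    RCLike.star_def, Complex.conj_re] at hpos
  nlinarith [hspos, hpos]
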